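/- Let (α,β) be an admissible non-null pair, B = B_{(α,β)}, Γ = Ω^•_{(α,β,−)}, and let π be the radix map π(d) = Σ_{j∈ℤ} d(j)·B^{−j}. For a finite binary string s = s_0 s_1 ⋯ s_N, let T′_s := {π(d) : d ∈ Γ, d(j) = 0 for all j < −N, and d(−N+i) = s_i for 0 ≤ i ≤ N}, and let X := {sup T′_s : s a finite binary string with T′_s ≠ ∅} (each nonempty T′_s is bounded, so the supremum exists). Then for every x ∈ X, also B·x ∈ X; that is, the associated tiling of [0,∞) is self-replicating. -/

import Mathlib

open scoped Classical

/-- Infinite binary strings. -/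
abbrev Omega : Type := ℕ → Bool

/-- The shift operator. -/
def shift (ω : Omega) : Omega := fun n => ω (n + 1)

/-- Strict lexicographic order on `Omega`. -/
def lexLt (σ ω : Omega) : Prop :=
  ∃ k : ℕ, (∀ i, i < k → σ i = ω i) ∧ σ k < ω k

/-- Non-strict lexicographic order on `Omega`. -/
def lexLe (σ ω : Omega) : Prop := lexLt σ ω ∨ σ = ω

/-- An admissible pair of strings. -/
def Admissible (α β : Omega) : Prop :=
  α 0 = false ∧ α 1 = true ∧ β 0 = true ∧ β 1 = false ∧
  (∀ n : ℕ, ¬ (lexLt α (shift^[n] α) ∧ lexLe (shift^[n] α) β)) ∧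
  (∀ n : ℕ, ¬ (lexLe α (shift^[n] β) ∧ lexLt (shift^[n] β) β))

/-- The address space `Ω_{(α,β,−)}`. -/
def OmegaMinus (α β : Omega) : Set Omega :=
  {ω | ∀ n : ℕ, ¬ (lexLt α (shift^[n] ω) ∧ lexLe (shift^[n] ω) β)}

/-- The address space `Ω_{(α,β,+)}`. -/
def OmegaPlus (α β : Omega) : Set Omega :=
  {ω | ∀ n : ℕ, ¬ (lexLe α (shift^[n] ω) ∧ lexLt (shift^[n] ω) β)}

/-- The address space `Ω_{(α,β)}`. -/
def OmegaUnion (α β : Omega) : Set Omega := OmegaMinus α β ∪ OmegaPlus α β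

/-- Length-`n` initial segments of the elements of `Γ`. -/
def initSegs (Γ : Set Omega) (n : ℕ) : Set (Fin n → Bool) :=
  (fun ω (i : Fin n) => ω i) '' Γ

/-- Exponential growth rate `h(Γ)`. -/
noncomputable def growth (Γ : Set Omega) : ℝ :=
  Filter.limsup (fun n : ℕ => Real.log ((initSegs Γ n).ncard) / (n : ℝ)) Filter.atTop

/-- The projection map `π_x`. -/
noncomputable def proj (x : ℝ) (ω : Omega) : ℝ :=
  (1 - x) * ∑' k : ℕ, (if ω k then (1 : ℝ) else 0) * x ^ k

/-- The equation `Σ α_n x^n = Σ β_n x^n`. -/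
def seriesEq (α β : Omega) (x : ℝ) : Prop :=
  (∑' n : ℕ, (if α n then (1 : ℝ) else 0) * x ^ n) =
    (∑' n : ℕ, (if β n then (1 : ℝ) else 0) * x ^ n)

/-- Solutions in `[1/2,1)` of `Σ α_n x^n = Σ β_n x^n`. -/
def baseSet (α β : Omega) : Set ℝ :=
  {x : ℝ | x ∈ Set.Ico (1/2 : ℝ) 1 ∧ seriesEq α β x}

/-- A decimal: a two-sided binary string vanishing far to the left. -/
def IsDecimal (d : ℤ → Bool) : Prop := ∃ m : ℤ, ∀ j, j < m → d j = false

/-- Strict order on decimals. -/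
def decLt (d e : ℤ → Bool) : Prop :=
  ∃ j : ℤ, (∀ i, i < j → d i = e i) ∧ d j < e j

/-- The set `Γ^•` of decimals obtained from strings in `Γ`. -/
def dot (Γ : Set Omega) : Set (ℤ → Bool) :=
  {d | ∃ m : ℤ, ∃ γ ∈ Γ, (∀ j, j < m → d j = false) ∧ ∀ i : ℕ, d (m + i) = γ i}

/-- Prepend a `0` to a string. -/
def cons0 (ω : Omega) : Omega := fun n => match n with | 0 => false | k + 1 => ω k

/-- The space `Ω⁰_{(α,β,−)}`. -/
def Omega0Minus (α β : Omega) : Set Omega :=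
  {ω ∈ OmegaMinus α β | lexLe (cons0 ω) α}

/-- The space `Ω⁰_{(α,β,+)}`. -/
def Omega0Plus (α β : Omega) : Set Omega :=
  {ω ∈ OmegaPlus α β | lexLt (cons0 ω) α}

/-- The address space of decimals `Ω^•_{(α,β,−)}`. -/
def dotMinus (α β : Omega) : Set (ℤ → Bool) := dot (Omega0Minus α β)

/-- The address space of decimals `Ω^•_{(α,β,+)}`. -/
def dotPlus (α β : Omega) : Set (ℤ → Bool) := dot (Omega0Plus α β)

/-- The address space of decimals `Ω^•_{(α,β)}`. -/
def dotUnion (α β : Omega) : Set (ℤ → Bool) :=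
  dot (Omega0Minus α β ∪ Omega0Plus α β)

/-- The radix map `d ↦ Σ_{j ∈ ℤ} d(j)·B^(−j)`. -/
noncomputable def radixVal (B : ℝ) (d : ℤ → Bool) : ℝ :=
  ∑' j : ℤ, (if d j then (1 : ℝ) else 0) * B ^ (-j)

/-- Shift invariance for a set of decimals. -/
def ShiftInvariantDec (Γ : Set (ℤ → Bool)) : Prop :=
  ∀ d ∈ Γ, ∀ k m : ℤ,
    (fun j : ℤ => if m ≤ j then d (j + k) else false) ∈ Γ

/-- The tile `T′_s` for a finite string `s = s_0 ⋯ s_N`: the set of radix values of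
decimals `d` in `Γ` with `d(j) = 0` for `j < −N` and `d(−N+i) = s_i` for `0 ≤ i ≤ N`. -/
def tileSet (Γ : Set (ℤ → Bool)) (B : ℝ) (N : ℕ) (s : ℕ → Bool) : Set ℝ :=
  {x : ℝ | ∃ d ∈ Γ, (∀ j : ℤ, j < -(N : ℤ) → d j = false) ∧
    (∀ i : ℕ, i ≤ N → d (-(N : ℤ) + i) = s i) ∧ radixVal B d = x}


lemma dot_shift_left {Γ : Set Omega} {d : ℤ → Bool} (hd : d ∈ dot Γ) :
    (fun j => d (j + 1)) ∈ dot Γ := by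
  obtain ⟨m, γ, hγ, h0, hm⟩ := hd
  refine ⟨m - 1, γ, hγ, fun j hj => h0 _ (by omega), fun i => ?_⟩
  show d (m - 1 + i + 1) = γ i
  rw [show m - 1 + (i : ℤ) + 1 = m + i by ring]
  exact hm i

lemma dot_shift_right {Γ : Set Omega} {d : ℤ → Bool} (hd : d ∈ dot Γ) :
    (fun j => d (j - 1)) ∈ dot Γ := by
  obtain ⟨m, γ, hγ, h0, hm⟩ := hd
  refine ⟨m + 1, γ, hγ, fun j hj => h0 _ (by omega), fun i => ?_⟩
  show d (m + 1 + i - 1) = γ i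
  rw [show m + 1 + (i : ℤ) - 1 = m + i by ring]
  exact hm i

lemma radix_shift {B : ℝ} (hB : B ≠ 0) (d : ℤ → Bool) :
    radixVal B (fun j => d (j + 1)) = B * radixVal B d := by
  unfold radixVal
  calc (∑' j : ℤ, (if d (j + 1) then (1:ℝ) else 0) * B ^ (-j))
      = ∑' k : ℤ, (if d (k - 1 + 1) then (1:ℝ) else 0) * B ^ (-(k - 1)) :=
        ((Equiv.subRight (1:ℤ)).tsum_eq
          (fun j => (if d (j + 1) then (1:ℝ) else 0) * B ^ (-j))).symm
    _ = ∑' k : ℤ, B * ((if d k then (1:ℝ) else 0) * B ^ (-k)) := by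
        congr 1; funext k
        rw [show k - 1 + 1 = k by ring, show -(k - 1) = -k + 1 by ring, zpow_add₀ hB,
          zpow_one]
        ring
    _ = B * ∑' k : ℤ, (if d k then (1:ℝ) else 0) * B ^ (-k) := tsum_mul_left

lemma radix_bound {B : ℝ} (hB : 1 < B) (N : ℕ) {d : ℤ → Bool}
    (h0 : ∀ j : ℤ, j < -(N : ℤ) → d j = false) :
    radixVal B d ≤ ∑' i : ℕ, B ^ (N : ℤ) * B⁻¹ ^ i := by
  have hB0 : (0:ℝ) < B := lt_trans one_pos hB
  set g : ℤ → ℝ := fun j => (if d j then (1:ℝ) else 0) * B ^ (-j) with hg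
  set f : ℕ → ℤ := fun i => -(N : ℤ) + i with hf
  have hinj : Function.Injective f := by
    intro a b hab
    simp only [hf] at hab; omega
  have hsupp : ∀ j : ℤ, j ∉ Set.range f → g j = 0 := by
    intro j hj
    have hjlt : j < -(N : ℤ) := by
      by_contra h
      exact hj ⟨(j + N).toNat, by simp only [hf]; omega⟩
    simp [hg, h0 j hjlt]
  have hgnonneg : ∀ j, 0 ≤ g j := by
    intro j
    have : (0:ℝ) ≤ B ^ (-j) := le_of_lt (zpow_pos hB0 _)
    simp only [hg]
    split
    · simp only [one_mul]; exact this
    · simp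
  have hle : ∀ i : ℕ, g (f i) ≤ B ^ (N : ℤ) * B⁻¹ ^ i := by
    intro i
    have h1 : g (f i) ≤ B ^ (-(f i)) := by
      simp only [hg]
      split
      · simp
      · simp [le_of_lt (zpow_pos hB0 _)]
    have h2 : B ^ (-(f i)) = B ^ (N : ℤ) * B⁻¹ ^ i := by
      simp only [hf]
      rw [show -(-(N:ℤ) + i) = (N:ℤ) + (-(i:ℤ)) by ring, zpow_add₀ (ne_of_gt hB0)]
      congr 1
      rw [zpow_neg, zpow_natCast, inv_pow]
    exact h2 ▸ h1
  have hsumh : Summable (fun i : ℕ => B ^ (N : ℤ) * B⁻¹ ^ i) :=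
    (summable_geometric_of_lt_one (by positivity) (inv_lt_one_of_one_lt₀ hB)).mul_left _
  have hsumgf : Summable (g ∘ f) :=
    Summable.of_nonneg_of_le (fun i => hgnonneg _) hle hsumh
  have hsumg : Summable g := by
    obtain ⟨a, ha⟩ := hsumgf
    exact ⟨a, (hinj.hasSum_iff hsupp).mp ha⟩
  have heq : radixVal B d = ∑' i : ℕ, g (f i) := by
    unfold radixVal
    exact (((hinj.hasSum_iff hsupp).mpr hsumg.hasSum).tsum_eq).symm
  rw [heq]
  exact Summable.tsum_le_tsum hle hsumgf hsumh

lemma sSup_image_mul {B : ℝ} (hB : 0 < B) {T : Set ℝ} (hne : T.Nonempty) (hbd : BddAbove T) :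
    sSup ((fun t => B * t) '' T) = B * sSup T := by
  apply IsLUB.csSup_eq _ (hne.image _)
  constructor
  · rintro y ⟨t, ht, rfl⟩
    exact mul_le_mul_of_nonneg_left (le_csSup hbd ht) hB.le
  · intro u hu
    have h : sSup T ≤ u / B := by
      apply csSup_le hne
      intro t ht
      have := hu (Set.mem_image_of_mem _ ht)
      exact (le_div_iff₀ hB).mpr (by linarith)
    calc B * sSup T ≤ B * (u / B) := mul_le_mul_of_nonneg_left h hB.le
      _ = u := by field_simp

/-- For an admissible non-null pair `(α,β)` with base `B = B_{(α,β)}` and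
`Γ = Ω^•_{(α,β,−)}`, the set `X` of right endpoints (suprema) of the nonempty tiles
`T′_s` is invariant under multiplication by `B`: the tiling is self-replicating. -/
theorem stmt_15 (α β : Omega) (hadm : Admissible α β)
    (hnonnull : 0 < growth (OmegaUnion α β))
    (b B : ℝ) (hb : IsLeast (baseSet α β) b) (hB : B = 1 / b) :
    ∀ x ∈ {x : ℝ | ∃ (N : ℕ) (s : ℕ → Bool),
        (tileSet (dotMinus α β) B N s).Nonempty ∧ x = sSup (tileSet (dotMinus α β) B N s)},
      B * x ∈ {x : ℝ | ∃ (N : ℕ) (s : ℕ → Bool),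
        (tileSet (dotMinus α β) B N s).Nonempty ∧
          x = sSup (tileSet (dotMinus α β) B N s)} := by
  have hb0 : (0:ℝ) < b := lt_of_lt_of_le (by norm_num) hb.1.1.1
  have hb1 : b < 1 := hb.1.1.2
  have hB1 : 1 < B := by
    rw [hB, lt_div_iff₀ hb0]; linarith
  have hB0 : (0:ℝ) < B := lt_trans one_pos hB1
  rintro x ⟨N, s, hne, rfl⟩
  set Γ := dotMinus α β with hΓ
  set T := tileSet Γ B N s with hT
  set s' : Bool → ℕ → Bool := fun c i => if i ≤ N then s i else c with hs'
  have hbd : ∀ (M : ℕ) (t : ℕ → Bool), BddAbove (tileSet Γ B M t) := by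
    intro M t
    refine ⟨∑' i : ℕ, B ^ (M : ℤ) * B⁻¹ ^ i, ?_⟩
    rintro y ⟨d, hd, h0, hvals, rfl⟩
    exact radix_bound hB1 M h0
  have himg : (fun t => B * t) '' T =
      tileSet Γ B (N+1) (s' false) ∪ tileSet Γ B (N+1) (s' true) := by
    ext y
    constructor
    · rintro ⟨_, ⟨d, hd, h0, hvals, rfl⟩, rfl⟩
      have hmem : B * radixVal B d ∈ tileSet Γ B (N+1) (s' (d 1)) := by
        refine ⟨fun j => d (j + 1), dot_shift_left hd, ?_, ?_, ?_⟩
        · intro j hj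
          apply h0; push_cast at hj ⊢; omega
        · intro i hi
          show d (-((N:ℕ)+1 : ℤ) + i + 1) = s' (d 1) i
          rcases Nat.lt_or_ge i (N+1) with h | h
          · have hiN : i ≤ N := by omega
            rw [show (-((N:ℕ)+1 : ℤ) + i + 1) = -(N:ℤ) + i by ring]
            rw [hvals i hiN]
            simp [hs', hiN]
          · have hieq : i = N + 1 := by omega
            subst hieq
            rw [show (-((N:ℕ)+1 : ℤ) + ((N:ℕ)+1 : ℕ) + 1) = 1 by push_cast; ring]
            simp [hs']
        · exact radix_shift (ne_of_gt hB0) d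
      cases hd1 : d 1 with
      | false => left; rw [hd1] at hmem; exact hmem
      | true => right; rw [hd1] at hmem; exact hmem
    · intro hy
      have key : ∀ c : Bool, y ∈ tileSet Γ B (N+1) (s' c) → y ∈ (fun t => B * t) '' T := by
        rintro c ⟨d, hd, h0, hvals, rfl⟩
        refine ⟨radixVal B (fun j => d (j - 1)),
          ⟨fun j => d (j - 1), dot_shift_right hd, ?_, ?_, rfl⟩, ?_⟩
        · intro j hj
          show d (j - 1) = false
          apply h0; push_cast; omega
        · intro i hi
          show d (-(N:ℤ) + i - 1) = s i
          rw [show -(N:ℤ) + i - 1 = -((N:ℕ)+1 : ℤ) + i by ring]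
          have := hvals i (by omega)
          rw [show (-((N:ℕ)+1 : ℕ) : ℤ) = -((N:ℕ)+1 : ℤ) by push_cast; ring] at this
          rw [this]
          simp [hs', hi]
        · have h := radix_shift (ne_of_gt hB0) (fun j => d (j - 1))
          have he : (fun j : ℤ => d (j + 1 - 1)) = d := by
            funext j; norm_num
          try simp only [] at h
          rw [he] at h
          exact h.symm
      rcases hy with h | h
      exacts [key false h, key true h]
  have hsup : sSup ((fun t => B * t) '' T) = B * sSup T := sSup_image_mul hB0 hne (hbd N s)
  by_cases h0 : (tileSet Γ B (N+1) (s' false)).Nonempty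
  · by_cases h1 : (tileSet Γ B (N+1) (s' true)).Nonempty
    · have hu : sSup (tileSet Γ B (N+1) (s' false) ∪ tileSet Γ B (N+1) (s' true)) =
          max (sSup (tileSet Γ B (N+1) (s' false))) (sSup (tileSet Γ B (N+1) (s' true))) :=
        csSup_union (hbd _ _) h0 (hbd _ _) h1
      rcases le_total (sSup (tileSet Γ B (N+1) (s' false)))
          (sSup (tileSet Γ B (N+1) (s' true))) with hc | hc
      · exact ⟨N+1, s' true, h1, by rw [← hsup, himg, hu, max_eq_right hc]⟩
      · exact ⟨N+1, s' false, h0, by rw [← hsup, himg, hu, max_eq_left hc]⟩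
    · rw [Set.not_nonempty_iff_eq_empty] at h1
      exact ⟨N+1, s' false, h0, by rw [← hsup, himg, h1, Set.union_empty]⟩
  · rw [Set.not_nonempty_iff_eq_empty] at h0
    by_cases h1 : (tileSet Γ B (N+1) (s' true)).Nonempty
    · exact ⟨N+1, s' true, h1, by rw [← hsup, himg, h0, Set.empty_union]⟩
    · exfalso
      rw [Set.not_nonempty_iff_eq_empty] at h1
      have himne := hne.image (fun t => B * t)
      rw [himg, h0, h1, Set.union_empty] at himne
      exact Set.not_nonempty_empty himne
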